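/- The TCUE_N two-point kernel κ_N(θ,θ') defined via the Christoffel–Darboux sum κ_N(θ,θ') = √(W(z)W(w)) Σ_{ℓ=0}^{N−1} ψ_ℓ(z) conj(ψ_ℓ(w)) with weight W(z) = 1 − cos θ (z = e^{iθ}, w = e^{iθ'}) and orthonormal Szegő–Askey polynomials ψ_ℓ(z) = √(2/((ℓ+1)(ℓ+2))) Σ_{j=1}^{ℓ+1} j z^{j−1}, satisfies κ_N(θ,θ') = e^{i(N−1)(θ−θ')/2} [ S_{N+1}(θ−θ') − (1/(N+1)) S_{N+1}(θ) S_{N+1}(θ') ], where S_{N+1}(θ) = sin((N+1)θ/2)/sin(θ/2). -/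

import Mathlib

open Finset Real

/-- The orthonormal Szegő–Askey polynomials
`ψ_ℓ(z) = √(2/((ℓ+1)(ℓ+2))) Σ_{j=1}^{ℓ+1} j z^{j-1}` for the weight `W(z) = 1 - cos θ`
on the unit circle. -/
noncomputable def szegoAskey (ℓ : ℕ) (z : ℂ) : ℂ :=
  (Real.sqrt (2 / ((ℓ + 1) * (ℓ + 2))) : ℝ) * ∑ j ∈ Finset.Icc 1 (ℓ + 1), (j : ℂ) * z ^ (j - 1)

/-- The CUE sine kernel `S_m(θ) = sin(mθ/2)/sin(θ/2)`. -/
noncomputable def sineKernel (m : ℕ) (θ : ℝ) : ℝ :=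
  Real.sin (m * θ / 2) / Real.sin (θ / 2)

lemma key_poly (N : ℕ) (u v : ℂ) :
    ∑ ℓ ∈ Finset.range N, (2 / (((ℓ:ℂ)+1) * ((ℓ:ℂ)+2))) *
      ((∑ j ∈ Finset.range (ℓ+1), u^j) - ((ℓ:ℂ)+1) * u^(ℓ+1)) *
      ((∑ j ∈ Finset.range (ℓ+1), v^j) - ((ℓ:ℂ)+1) * v^(ℓ+1))
    = 2 * ((∑ k ∈ Finset.range (N+1), (u*v)^k)
        - (1/((N:ℂ)+1)) * (∑ k ∈ Finset.range (N+1), u^k) * (∑ k ∈ Finset.range (N+1), v^k)) := by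
  induction N with
  | zero => simp
  | succ n ih =>
      have expand : ∀ x : ℂ, ∑ k ∈ Finset.range ((n+1)+1), x^k
          = (∑ k ∈ Finset.range (n+1), x^k) + x^(n+1) := fun x => Finset.sum_range_succ _ _
      rw [Finset.sum_range_succ, ih, expand (u*v), expand u, expand v]
      have h1 : ((n:ℂ)+1) ≠ 0 := Nat.cast_add_one_ne_zero n
      have h2 : ((n:ℂ)+2) ≠ 0 := by
        have : ((n:ℂ)+2) = ((n+1:ℕ):ℂ)+1 := by push_cast; ring
        rw [this]; exact Nat.cast_add_one_ne_zero (n+1)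
      have h3 : ((n:ℂ)+1+1) ≠ 0 := by
        have : ((n:ℂ)+1+1) = ((n+1:ℕ):ℂ)+1 := by push_cast; ring
        rw [this]; exact Nat.cast_add_one_ne_zero (n+1)
      push_cast
      field_simp
      ring

lemma tcue_icc_sum (ℓ : ℕ) (x : ℂ) :
    ∑ j ∈ Finset.Icc 1 (ℓ+1), (j:ℂ) * x^(j-1)
      = ∑ i ∈ Finset.range (ℓ+1), ((i:ℂ)+1) * x^i := by
  induction ℓ with
  | zero => simp
  | succ n ih =>
      rw [Finset.sum_Icc_succ_top (by omega), ih,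
          Finset.sum_range_succ (f := fun i : ℕ => ((i:ℂ)+1) * x^i) (n+1)]
      push_cast
      ring

lemma tcue_one_sub_mul (ℓ : ℕ) (x : ℂ) :
    (1 - x) * ∑ i ∈ Finset.range (ℓ+1), ((i:ℂ)+1) * x^i
      = (∑ j ∈ Finset.range (ℓ+1), x^j) - ((ℓ:ℂ)+1) * x^(ℓ+1) := by
  induction ℓ with
  | zero => simp
  | succ n ih =>
      rw [Finset.sum_range_succ, mul_add, ih,
          Finset.sum_range_succ (f := fun j : ℕ => x^j) (n+1)]
      push_cast
      ring

lemma tcue_exp_sub_exp (w : ℂ) :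
    Complex.exp (Complex.I * w) - Complex.exp (-(Complex.I * w)) = 2 * Complex.I * Complex.sin w := by
  have e1 : Complex.exp (w * Complex.I) = Complex.exp (Complex.I * w) := by rw [mul_comm]
  have e2 : Complex.exp (-w * Complex.I) = Complex.exp (-(Complex.I * w)) := by congr 1; ring
  rw [Complex.sin, e1, e2]
  linear_combination (Complex.exp (Complex.I*w) - Complex.exp (-(Complex.I*w))) * Complex.I_sq

lemma tcue_geo (m : ℕ) (φ : ℝ) (h : Real.sin (φ/2) ≠ 0) :
    ∑ k ∈ Finset.range m, Complex.exp (Complex.I * k * φ)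
      = Complex.exp (Complex.I * ((m:ℂ) - 1) * φ / 2) * ((sineKernel m φ : ℝ) : ℂ) := by
  have hs : Complex.sin ((φ:ℂ)/2) ≠ 0 := by
    rw [show ((φ:ℂ)/2) = ((φ/2 : ℝ) : ℂ) by push_cast; ring, ← Complex.ofReal_sin]
    exact_mod_cast h
  have hfac : (2 * Complex.I * Complex.sin ((φ:ℂ)/2)) ≠ 0 := by
    simp [Complex.I_ne_zero, hs]
  apply mul_right_cancel₀ hfac
  have hterm : ∀ k : ℕ, Complex.exp (Complex.I * k * φ) * (2 * Complex.I * Complex.sin ((φ:ℂ)/2))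
      = Complex.exp (Complex.I * ((k+1 : ℕ):ℂ) * φ - Complex.I * φ / 2)
        - Complex.exp (Complex.I * (k:ℂ) * φ - Complex.I * φ / 2) := by
    intro k
    rw [← tcue_exp_sub_exp, mul_sub, ← Complex.exp_add, ← Complex.exp_add]
    congr 2 <;> push_cast <;> ring
  rw [Finset.sum_mul]
  simp only [hterm]
  rw [Finset.sum_range_sub (f := fun k => Complex.exp (Complex.I * (k:ℂ) * φ - Complex.I * φ / 2))]
  rw [sineKernel]
  push_cast
  rw [show Complex.exp (Complex.I*((m:ℂ)-1)*φ/2) * (Complex.sin ((m:ℂ)*φ/2) / Complex.sin ((φ:ℂ)/2))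
        * (2*Complex.I*Complex.sin ((φ:ℂ)/2))
      = Complex.exp (Complex.I*((m:ℂ)-1)*φ/2) * (2*Complex.I*Complex.sin ((m:ℂ)*φ/2)) by
    field_simp]
  rw [← tcue_exp_sub_exp ((m:ℂ)*φ/2), mul_sub, ← Complex.exp_add, ← Complex.exp_add]
  congr 1 <;> congr 1 <;> ring

lemma tcue_one_sub_exp (x : ℝ) :
    1 - Complex.exp (Complex.I * x)
      = -(Complex.exp (Complex.I * x / 2)) * (2 * Complex.I * ((Real.sin (x/2) : ℝ) : ℂ)) := by
  have h1 : ((Real.sin (x/2) : ℝ) : ℂ) = Complex.sin ((x:ℂ)/2) := by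
    rw [show ((x:ℂ)/2) = ((x/2:ℝ):ℂ) by push_cast; ring, Complex.ofReal_sin]
  rw [h1, ← tcue_exp_sub_exp ((x:ℂ)/2)]
  have e1 : Complex.exp (Complex.I * (x:ℂ) / 2) * Complex.exp (Complex.I * ((x:ℂ)/2))
      = Complex.exp (Complex.I * x) := by rw [← Complex.exp_add]; congr 1; ring
  have e2 : Complex.exp (Complex.I * (x:ℂ) / 2) * Complex.exp (-(Complex.I * ((x:ℂ)/2))) = 1 := by
    rw [← Complex.exp_add, show Complex.I * (x:ℂ) / 2 + -(Complex.I * ((x:ℂ)/2)) = 0 by ring,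
        Complex.exp_zero]
  linear_combination e1 - e2

/-- The TCUE two-point kernel, defined via the Christoffel–Darboux sum
`κ_N(θ,θ') = √(W(θ)W(θ')) Σ_{ℓ=0}^{N-1} ψ_ℓ(e^{iθ}) conj(ψ_ℓ(e^{iθ'}))` with
`W(θ) = 1 - cos θ`, equals
`e^{i(N-1)(θ-θ')/2} [S_{N+1}(θ-θ') - (1/(N+1)) S_{N+1}(θ) S_{N+1}(θ')]`. -/
theorem tcue_kernel_sine_kernel_form
    (N : ℕ) (hN : 1 ≤ N) (θ θ' : ℝ)
    (hθ : θ ∈ Set.Ioo 0 (2 * π)) (hθ' : θ' ∈ Set.Ioo 0 (2 * π)) (hne : θ ≠ θ') :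
    (Real.sqrt ((1 - Real.cos θ) * (1 - Real.cos θ')) : ℝ) *
        ∑ ℓ ∈ Finset.range N,
          szegoAskey ℓ (Complex.exp (Complex.I * θ)) *
            (starRingEnd ℂ) (szegoAskey ℓ (Complex.exp (Complex.I * θ')))
      = Complex.exp (Complex.I * ((N : ℂ) - 1) * ((θ : ℂ) - (θ' : ℂ)) / 2) *
          ((sineKernel (N + 1) (θ - θ')
            - (1 / (N + 1)) * sineKernel (N + 1) θ * sineKernel (N + 1) θ' : ℝ) : ℂ) := by
  obtain ⟨hθ0, hθ2⟩ := hθ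
  obtain ⟨hθ'0, hθ'2⟩ := hθ'
  have hπ := Real.pi_pos
  set z : ℂ := Complex.exp (Complex.I * θ) with hzdef
  set v : ℂ := Complex.exp (-Complex.I * θ') with hvdef
  have hs : 0 < Real.sin (θ/2) := Real.sin_pos_of_pos_of_lt_pi (by linarith) (by linarith)
  have hs' : 0 < Real.sin (θ'/2) := Real.sin_pos_of_pos_of_lt_pi (by linarith) (by linarith)
  have hΔ : Real.sin ((θ-θ')/2) ≠ 0 := by
    intro h0
    have h1 : -π < (θ-θ')/2 := by linarith
    have h2 : (θ-θ')/2 < π := by linarith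
    have := (Real.sin_eq_zero_iff_of_lt_of_lt h1 h2).mp h0
    exact hne (by linarith)
  -- weight
  have hsq : ∀ x : ℝ, 1 - Real.cos x = 2 * Real.sin (x/2)^2 := by
    intro x
    have h1 := Real.sin_sq_add_cos_sq (x/2)
    have h2 := Real.cos_sq (x/2)
    rw [show 2*(x/2) = x by ring] at h2
    nlinarith [h1, h2]
  have hW : Real.sqrt ((1 - Real.cos θ) * (1 - Real.cos θ'))
      = 2 * Real.sin (θ/2) * Real.sin (θ'/2) := by
    rw [hsq θ, hsq θ', show 2*Real.sin (θ/2)^2 * (2*Real.sin (θ'/2)^2)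
        = (2 * Real.sin (θ/2) * Real.sin (θ'/2))^2 by ring]
    exact Real.sqrt_sq (by positivity)
  -- rewrite each summand
  have hterm : ∀ ℓ : ℕ, szegoAskey ℓ z * (starRingEnd ℂ) (szegoAskey ℓ (Complex.exp (Complex.I * θ')))
      = (2 / (((ℓ:ℂ)+1) * ((ℓ:ℂ)+2))) *
        (∑ i ∈ Finset.range (ℓ+1), ((i:ℂ)+1) * z^i) *
        (∑ i ∈ Finset.range (ℓ+1), ((i:ℂ)+1) * v^i) := by
    intro ℓ
    unfold szegoAskey
    rw [map_mul, map_sum]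
    simp only [map_mul, map_pow, map_natCast, Complex.conj_ofReal, ← Complex.exp_conj,
      Complex.conj_I]
    rw [tcue_icc_sum, tcue_icc_sum, ← hvdef]
    have hcc : (((Real.sqrt (2 / (((ℓ:ℝ) + 1) * ((ℓ:ℝ) + 2))) : ℝ) : ℂ) *
          ((Real.sqrt (2 / (((ℓ:ℝ) + 1) * ((ℓ:ℝ) + 2))) : ℝ) : ℂ))
        = 2 / (((ℓ:ℂ)+1) * ((ℓ:ℂ)+2)) := by
      rw [← Complex.ofReal_mul, Real.mul_self_sqrt (by positivity)]
      push_cast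
      ring
    linear_combination (∑ i ∈ Finset.range (ℓ+1), ((i:ℂ)+1) * z^i) *
      (∑ i ∈ Finset.range (ℓ+1), ((i:ℂ)+1) * v^i) * hcc
  rw [Finset.sum_congr rfl (fun (ℓ : ℕ) _ => hterm ℓ), hW]
  -- factorizations of 1 - z and 1 - v
  have hz1 : (1:ℂ) - z = -(Complex.exp (Complex.I * θ / 2)) *
      (2 * Complex.I * ((Real.sin (θ/2) : ℝ) : ℂ)) := tcue_one_sub_exp θ
  have hv1 : (1:ℂ) - v = -(Complex.exp (Complex.I * (-θ':ℝ) / 2)) *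
      (2 * Complex.I * (-((Real.sin (θ'/2) : ℝ) : ℂ))) := by
    have := tcue_one_sub_exp (-θ')
    rw [show Complex.exp (Complex.I * ((-θ':ℝ):ℂ)) = v by
      rw [hvdef]; congr 1; push_cast; ring] at this
    rw [this]
    congr 2
    rw [show (-θ':ℝ)/2 = -(θ'/2) by ring, Real.sin_neg]
    push_cast; ring
  have hcs : Complex.sin ((θ:ℂ)/2) ≠ 0 := by
    rw [show ((θ:ℂ)/2) = ((θ/2:ℝ):ℂ) by push_cast; ring, ← Complex.ofReal_sin]
    exact_mod_cast hs.ne'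
  have hcs' : Complex.sin ((θ':ℂ)/2) ≠ 0 := by
    rw [show ((θ':ℂ)/2) = ((θ'/2:ℝ):ℂ) by push_cast; ring, ← Complex.ofReal_sin]
    exact_mod_cast hs'.ne'
  have hzne : (1:ℂ) - z ≠ 0 := by
    rw [hz1]
    simp [Complex.exp_ne_zero, Complex.I_ne_zero, hcs]
  have hvne : (1:ℂ) - v ≠ 0 := by
    rw [hv1]
    simp [Complex.exp_ne_zero, Complex.I_ne_zero, hcs']
  apply mul_left_cancel₀ (mul_ne_zero hzne hvne)
  -- transform left side using key_poly
  rw [show ((1:ℂ)-z)*((1:ℂ)-v) * (((2 * Real.sin (θ/2) * Real.sin (θ'/2) : ℝ):ℂ) *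
        ∑ ℓ ∈ Finset.range N, (2 / (((ℓ:ℂ)+1) * ((ℓ:ℂ)+2)) *
          ∑ i ∈ Finset.range (ℓ+1), ((i:ℂ)+1) * z^i) *
          (∑ i ∈ Finset.range (ℓ+1), ((i:ℂ)+1) * v^i))
      = ((2 * Real.sin (θ/2) * Real.sin (θ'/2) : ℝ):ℂ) *
        ∑ ℓ ∈ Finset.range N, (((1:ℂ)-z)*((1:ℂ)-v)) * ((2 / (((ℓ:ℂ)+1) * ((ℓ:ℂ)+2)) *
          ∑ i ∈ Finset.range (ℓ+1), ((i:ℂ)+1) * z^i) *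
          (∑ i ∈ Finset.range (ℓ+1), ((i:ℂ)+1) * v^i)) from by
    rw [← Finset.mul_sum]
    ring]
  rw [Finset.sum_congr rfl (fun (ℓ : ℕ) _ =>
    show (((1:ℂ)-z)*((1:ℂ)-v)) * ((2 / (((ℓ:ℂ)+1) * ((ℓ:ℂ)+2)) *
          ∑ i ∈ Finset.range (ℓ+1), ((i:ℂ)+1) * z^i) *
          (∑ i ∈ Finset.range (ℓ+1), ((i:ℂ)+1) * v^i))
      = (2 / (((ℓ:ℂ)+1) * ((ℓ:ℂ)+2))) *
          (((1:ℂ)-z) * ∑ i ∈ Finset.range (ℓ+1), ((i:ℂ)+1) * z^i) *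
          (((1:ℂ)-v) * ∑ i ∈ Finset.range (ℓ+1), ((i:ℂ)+1) * v^i) from by ring)]
  simp only [tcue_one_sub_mul]
  rw [key_poly]
  -- geometric sums to sine kernels
  have hGz : ∀ x : ℂ, ∀ φ : ℝ, x = Complex.exp (Complex.I * φ) →
      ∑ k ∈ Finset.range (N+1), x^k
        = ∑ k ∈ Finset.range (N+1), Complex.exp (Complex.I * k * φ) := by
    intro x φ hx
    apply Finset.sum_congr rfl
    intro k _
    rw [hx, ← Complex.exp_nat_mul]
    congr 1; ring
  rw [hGz (z*v) (θ - θ') (by rw [hzdef, hvdef, ← Complex.exp_add]; congr 1; push_cast; ring),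
      hGz z θ rfl,
      hGz v (-θ') (by rw [hvdef]; congr 1; push_cast; ring)]
  rw [tcue_geo (N+1) (θ - θ') hΔ, tcue_geo (N+1) θ (by
        rw [show θ/2 = θ/2 by rfl]; exact hs.ne'),
      tcue_geo (N+1) (-θ') (by
        rw [show (-θ')/2 = -(θ'/2) by ring, Real.sin_neg]; simpa using hs'.ne')]
  have hSneg : sineKernel (N+1) (-θ') = sineKernel (N+1) θ' := by
    rw [sineKernel, sineKernel, show ((N+1:ℕ):ℝ) * (-θ')/2 = -(((N+1:ℕ):ℝ) * θ'/2) by ring,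
        show (-θ':ℝ)/2 = -(θ'/2) by ring, Real.sin_neg, Real.sin_neg, neg_div_neg_eq]
  rw [hSneg, hz1, hv1]
  -- final scalar identity
  have hcd : Complex.exp (Complex.I * (N:ℂ) * θ / 2) * Complex.exp (-(Complex.I * (N:ℂ) * θ' / 2))
      = Complex.exp (Complex.I * ((N:ℂ) - 1) * ((θ:ℂ) - (θ':ℂ)) / 2) *
        (Complex.exp (Complex.I * θ / 2) * Complex.exp (Complex.I * ((-θ':ℝ):ℂ) / 2)) := by
    rw [← Complex.exp_add, ← Complex.exp_add, ← Complex.exp_add]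
    congr 1; push_cast; ring
  have hE1 : Complex.exp (Complex.I * (((N+1:ℕ):ℂ) - 1) * ((θ - θ' : ℝ):ℂ) / 2)
      = Complex.exp (Complex.I * (N:ℂ) * θ / 2) * Complex.exp (-(Complex.I * (N:ℂ) * θ' / 2)) := by
    rw [← Complex.exp_add]; congr 1; push_cast; ring
  have hE2 : Complex.exp (Complex.I * (((N+1:ℕ):ℂ) - 1) * (θ:ℂ) / 2)
      = Complex.exp (Complex.I * (N:ℂ) * θ / 2) := by congr 1; push_cast; ring
  have hE3 : Complex.exp (Complex.I * (((N+1:ℕ):ℂ) - 1) * ((-θ' : ℝ):ℂ) / 2)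
      = Complex.exp (-(Complex.I * (N:ℂ) * θ' / 2)) := by congr 1; push_cast; ring
  rw [hE1, hE2, hE3]
  push_cast
  have hI2 : (Complex.I)^2 = -1 := Complex.I_sq
  have hN1 : ((N:ℂ)+1) ≠ 0 := Nat.cast_add_one_ne_zero N
  field_simp
  have hcd : Complex.exp ((θ:ℂ) * Complex.I * (N:ℂ) / 2) * Complex.exp (-((θ':ℂ) * Complex.I * (N:ℂ) / 2))
      = Complex.exp (Complex.I * ((N:ℂ) - 1) * ((θ:ℂ) - (θ':ℂ)) / 2) *
        (Complex.exp ((θ:ℂ) * Complex.I / 2) * Complex.exp (-((θ':ℂ) * Complex.I / 2))) := by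
    rw [← Complex.exp_add, ← Complex.exp_add, ← Complex.exp_add]
    congr 1
    ring
  linear_combination ((((sineKernel (N + 1) (θ - θ') : ℝ) : ℂ) * ((N:ℂ)+1)
        - ((sineKernel (N + 1) θ : ℝ) : ℂ) * ((sineKernel (N + 1) θ' : ℝ) : ℂ))) * hcd
    + ((((sineKernel (N + 1) (θ - θ') : ℝ) : ℂ) * ((N:ℂ)+1)
        - ((sineKernel (N + 1) θ : ℝ) : ℂ) * ((sineKernel (N + 1) θ' : ℝ) : ℂ)) *
      Complex.exp ((θ:ℂ) * Complex.I / 2) * Complex.exp (-((θ':ℂ) * Complex.I / 2)) *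
      Complex.exp (Complex.I * ((N:ℂ) - 1) * ((θ:ℂ) - (θ':ℂ)) / 2)) * hI2
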